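/- Under the skew-product hypotheses below, for every k ∈ ℕ and every word w = (w₁, …, w_k) ∈ {1,2}^k, the set M₁ × {g_w a₁} is contained in the image f^[k+1] '' (U × {a₁}), where g_w = g_{w_k} ∘ ⋯ ∘ g_{w₁}. -/

import Mathlib

/-- The composition `g_w = g_{w_k} ∘ ⋯ ∘ g_{w₁}` associated with a finite word
`w = (w₁, …, w_k)` in the alphabet `{1, 2}` (here `false` codes `1` and `true` codes `2`):
the first letter of the list is applied first. -/
def wordMap {M₂ : Type*} (g₁ g₂ : M₂ → M₂) (w : List Bool) (y : M₂) : M₂ :=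
  w.foldl (fun z b => if b then g₂ z else g₁ z) y

/-- Key inclusion in the proof of Lemma 3.1: for every word `w` of length `k` in `{1,2}`,
`M₁ × {g_w a₁} ⊆ f^[k+1] '' (U × {a₁})`. -/
theorem univ_prod_word_subset_iterate_image
    {M₁ M₂ : Type*} [TopologicalSpace M₁] [TopologicalSpace M₂]
    (F : M₁ → M₁) (hF : Continuous F)
    (U V : Set M₁) (hUopen : IsOpen U) (hVopen : IsOpen V)
    (hUne : U.Nonempty) (hVne : V.Nonempty) (hUV : Disjoint U V)
    (hFU : F '' U = Set.univ) (hFV : F '' V = Set.univ)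
    (g₁ g₂ : M₂ → M₂) (hg₁ : Continuous g₁) (hg₂ : Continuous g₂)
    (a₁ : M₂) (ha₁ : g₁ a₁ = a₁)
    (h : M₁ × M₂ → M₂) (hh : Continuous h)
    (f : M₁ × M₂ → M₁ × M₂) (hf : ∀ x y, f (x, y) = (F x, h (x, y)))
    (hhU : ∀ x ∈ U, ∀ y : M₂, h (x, y) = g₁ y)
    (hhV : ∀ x ∈ V, ∀ y : M₂, h (x, y) = g₂ y) :
    ∀ w : List Bool,
      (Set.univ ×ˢ ({wordMap g₁ g₂ w a₁} : Set M₂)) ⊆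
        f^[w.length + 1] '' (U ×ˢ ({a₁} : Set M₂)) := by
  intro w
  induction w using List.reverseRecOn with
  | nil =>
    rintro ⟨x, y⟩ ⟨-, hy⟩
    simp only [wordMap, List.foldl_nil, Set.mem_singleton_iff] at hy
    obtain ⟨u, hu, hux⟩ : x ∈ F '' U := by rw [hFU]; trivial
    refine ⟨(u, a₁), ⟨hu, rfl⟩, ?_⟩
    simp [hf, hux, hhU u hu, ha₁, hy]
  | append_singleton t b ih =>
    rintro ⟨x, y⟩ ⟨-, hy⟩
    simp only [wordMap, List.foldl_append, List.foldl_cons, List.foldl_nil,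
      Set.mem_singleton_iff] at hy
    have hx : x ∈ F '' U ∩ F '' V := by rw [hFU, hFV]; simp
    have key : ∃ u, (if b then u ∈ V else u ∈ U) ∧ F u = x ∧
        h (u, wordMap g₁ g₂ t a₁) = y := by
      cases b with
      | false =>
        obtain ⟨u, hu, hux⟩ := hx.1
        exact ⟨u, hu, hux, by rw [hhU u hu]; simpa [wordMap] using hy.symm⟩
      | true =>
        obtain ⟨u, hu, hux⟩ := hx.2
        exact ⟨u, hu, hux, by rw [hhV u hu]; simpa [wordMap] using hy.symm⟩
    obtain ⟨u, -, hux, huy⟩ := key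
    have hmem : (u, wordMap g₁ g₂ t a₁) ∈ f^[t.length + 1] '' (U ×ˢ ({a₁} : Set M₂)) :=
      ih ⟨trivial, rfl⟩
    obtain ⟨p, hp, hpu⟩ := hmem
    refine ⟨p, hp, ?_⟩
    have : (t ++ [b]).length + 1 = (t.length + 1) + 1 := by simp
    rw [this, Function.iterate_succ_apply', hpu, hf, hux, huy]
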